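/- For the rank-4 fusion ring PSU(2)_7 with formal codegrees being the roots of (x³ - 27x² + 162x - 243)(x - 3), every ratio c_1/c_j of the largest root c_1 of x³ - 27x² + 162x - 243 to any other formal codegree c_j is an algebraic integer. -/

import Mathlib

/-- For PSU(2)₇, whose formal codegrees are the roots of
(x³ - 27x² + 162x - 243)(x - 3), every ratio c₁/cⱼ of the largest root c₁ of
the cubic to any other formal codegree cⱼ is an algebraic integer. -/
theorem psu2_7_drinfeld_ratios
    (c₁ : ℝ)
    (h₁ : c₁ ^ 3 - 27 * c₁ ^ 2 + 162 * c₁ - 243 = 0)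
    (hmax : ∀ c : ℝ, c ^ 3 - 27 * c ^ 2 + 162 * c - 243 = 0 → c ≤ c₁) :
    ∀ c : ℝ, (c ^ 3 - 27 * c ^ 2 + 162 * c - 243 = 0 ∨ c = 3) →
      IsIntegral ℤ (c₁ / c) := by
  intro c hc
  rcases hc with hc | rfl
  · -- c is a root of the cubic; the ratio satisfies
    -- x⁹ - 18x⁸ + 117x⁷ - 372x⁶ + 648x⁵ - 648x⁴ + 372x³ - 117x² + 18x - 1
    have hc0 : c ≠ 0 := by rintro rfl; norm_num at hc
    refine ⟨Polynomial.X ^ 9 - 18 * Polynomial.X ^ 8 + 117 * Polynomial.X ^ 7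
        - 372 * Polynomial.X ^ 6 + 648 * Polynomial.X ^ 5 - 648 * Polynomial.X ^ 4
        + 372 * Polynomial.X ^ 3 - 117 * Polynomial.X ^ 2 + 18 * Polynomial.X - 1,
      by monicity!, ?_⟩
    simp only [Polynomial.eval₂_sub, Polynomial.eval₂_add, Polynomial.eval₂_mul,
      Polynomial.eval₂_pow, Polynomial.eval₂_X, Polynomial.eval₂_one,
      Polynomial.eval₂_ofNat]
    have key : c₁^9 - 18*c₁^8*c + 117*c₁^7*c^2 - 372*c₁^6*c^3 + 648*c₁^5*c^4
        - 648*c₁^4*c^5 + 372*c₁^3*c^6 - 117*c₁^2*c^7 + 18*c₁*c^8 - c^9 = 0 := by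
      linear_combination
        (c₁^6 - 18*c₁^5*c + 27*c₁^5 + 117*c₁^4*c^2 - 486*c₁^4*c + 567*c₁^4
        - 372*c₁^3*c^3 + 3159*c₁^3*c^2 - 10206*c₁^3*c + 11178*c₁^3
        + 648*c₁^2*c^4 - 10044*c₁^2*c^3 + 66339*c₁^2*c^2 - 201204*c₁^2*c
        + 216513*c₁^2 - 648*c₁*c^5 + 17496*c₁*c^4 - 210924*c₁*c^3
        + 1307826*c₁*c^2 - 3897234*c₁*c + 4172796*c₁ + 372*c^6 - 17496*c^5
        + 367416*c^4 - 4158216*c^3 + 25332021*c^2 - 75110328*c + 80306640) * h₁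
      + (-117*c₁^2*c^4 + 6885*c₁^2*c^3 - 162567*c₁^2*c^2 + 1710234*c₁^2*c
        - 6357609*c₁^2 + 18*c₁*c^5 + 486*c₁*c^4 - 50058*c₁*c^3 + 1250964*c₁*c^2
        - 13266342*c₁*c + 49364964*c₁ - c^6 - 27*c^5 - 567*c^4 + 79218*c^3
        - 2027349*c^2 + 21572568*c - 80306640) * hc
    have expand : (c₁/c)^9 - 18*(c₁/c)^8 + 117*(c₁/c)^7 - 372*(c₁/c)^6 + 648*(c₁/c)^5
        - 648*(c₁/c)^4 + 372*(c₁/c)^3 - 117*(c₁/c)^2 + 18*(c₁/c) - 1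
        = (c₁^9 - 18*c₁^8*c + 117*c₁^7*c^2 - 372*c₁^6*c^3 + 648*c₁^5*c^4
        - 648*c₁^4*c^5 + 372*c₁^3*c^6 - 117*c₁^2*c^7 + 18*c₁*c^8 - c^9)/c^9 := by
      field_simp
    linear_combination expand + key / c^9
  · -- c = 3 : the ratio c₁/3 satisfies x³ - 9x² + 18x - 9
    refine ⟨Polynomial.X ^ 3 - 9 * Polynomial.X ^ 2 + 18 * Polynomial.X - 9,
      by monicity!, ?_⟩
    simp only [Polynomial.eval₂_sub, Polynomial.eval₂_add, Polynomial.eval₂_mul,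
      Polynomial.eval₂_pow, Polynomial.eval₂_X, Polynomial.eval₂_ofNat]
    have h3 : (3 : ℝ) ≠ 0 := by norm_num
    field_simp
    linear_combination h₁
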